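/- Let 0 < d < s and let X, Y be independent random variables each uniformly distributed on [0,s]. Let r₁, r₂ ∈ [0,1] with r₁ + r₂ < 1 and suppose d ≤ s(1−r₁) and d ≤ s(1−r₂). Then the diversified positions ν₁ = (1−r₁)X + r₁Y and ν₂ = r₂X + (1−r₂)Y satisfy P(ν₁ ≤ d and ν₂ ≤ d) = (1/2)·(d/s)²·(1/(1−r₁) + 1/(1−r₂)). -/

import Mathlib

open MeasureTheory ProbabilityTheory Set ENNReal

/-- The uniform probability distribution on the interval `[0, s]`. -/
noncomputable def uniformOnIcc (s : ℝ) : Measure ℝ :=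
  (ENNReal.ofReal s)⁻¹ • (volume.restrict (Icc (0 : ℝ) s))

private lemma smul_prod_smul_aux (c c' : ℝ≥0∞) (μ ν : Measure ℝ) [SigmaFinite μ] [SigmaFinite ν]
    [SigmaFinite (c • μ)] [SigmaFinite (c' • ν)] :
    (c • μ).prod (c' • ν) = (c * c') • μ.prod ν := by
  refine Measure.prod_eq fun A B hA hB => ?_
  simp [Measure.prod_prod, mul_mul_mul_comm]

private lemma lint_tri_aux (d e : ℝ) (hd : 0 ≤ d) (he : 0 < e) :
    ∫⁻ t in Icc (0:ℝ) d, ENNReal.ofReal ((d - t)/e) = ENNReal.ofReal (d^2/(2*e)) := by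
  have hInt : IntegrableOn (fun t : ℝ => (d - t)/e) (Icc 0 d) :=
    Continuous.integrableOn_Icc (by fun_prop)
  rw [← ofReal_integral_eq_lintegral_ofReal hInt
    ((ae_restrict_iff' measurableSet_Icc).2 (Filter.Eventually.of_forall fun t ht =>
      div_nonneg (by linarith [ht.2]) he.le))]
  congr 1
  rw [MeasureTheory.integral_Icc_eq_integral_Ioc, ← intervalIntegral.integral_of_le hd]
  have h : ∀ t : ℝ, (d - t)/e = (d - t) * e⁻¹ := fun t => div_eq_mul_inv _ _
  simp_rw [h]
  rw [intervalIntegral.integral_mul_const,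
    intervalIntegral.integral_sub intervalIntegrable_const intervalIntegral.intervalIntegrable_id,
    intervalIntegral.integral_const, integral_id]
  field_simp
  ring

/-- for `r₁ + r₂ < 1` with `d ≤ s(1-r₁)` and `d ≤ s(1-r₂)`, the probability
of joint default is `(1/2)·(d/s)²·(1/(1-r₁) + 1/(1-r₂))`. -/
theorem prob_joint_default_sum_lt_one
    {Ω : Type*} [MeasurableSpace Ω] (P : Measure Ω) [IsProbabilityMeasure P]
    (s d : ℝ) (hd : 0 < d) (hds : d < s)
    (X Y : Ω → ℝ) (hXm : Measurable X) (hYm : Measurable Y)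
    (hX : P.map X = uniformOnIcc s) (hY : P.map Y = uniformOnIcc s)
    (hXY : IndepFun X Y P)
    (r₁ r₂ : ℝ) (hr₁ : r₁ ∈ Icc (0 : ℝ) 1) (hr₂ : r₂ ∈ Icc (0 : ℝ) 1)
    (hsum : r₁ + r₂ < 1) (h1 : d ≤ s * (1 - r₁)) (h2 : d ≤ s * (1 - r₂)) :
    P {ω | (1 - r₁) * X ω + r₁ * Y ω ≤ d ∧ r₂ * X ω + (1 - r₂) * Y ω ≤ d}
      = ENNReal.ofReal ((1 / 2) * (d / s) ^ 2 * (1 / (1 - r₁) + 1 / (1 - r₂))) := by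
  obtain ⟨hr₁0, hr₁1⟩ := hr₁
  obtain ⟨hr₂0, hr₂1⟩ := hr₂
  have hs : 0 < s := hd.trans hds
  have e₁ : 0 < 1 - r₁ := by linarith
  have e₂ : 0 < 1 - r₂ := by linarith
  set S : Set (ℝ × ℝ) :=
    {p | (1 - r₁) * p.1 + r₁ * p.2 ≤ d ∧ r₂ * p.1 + (1 - r₂) * p.2 ≤ d} with hSdef
  have hSm : MeasurableSet S :=
    (measurableSet_le ((measurable_fst.const_mul _).add (measurable_snd.const_mul _))
        measurable_const).inter
      (measurableSet_le ((measurable_fst.const_mul _).add (measurable_snd.const_mul _))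
        measurable_const)
  have hpre : {ω | (1 - r₁) * X ω + r₁ * Y ω ≤ d ∧ r₂ * X ω + (1 - r₂) * Y ω ≤ d}
      = (fun ω => (X ω, Y ω)) ⁻¹' S := rfl
  have hmap : P.map (fun ω => (X ω, Y ω)) = (uniformOnIcc s).prod (uniformOnIcc s) :=
    ((indepFun_iff_map_prod_eq_prod_map_map hXm.aemeasurable hYm.aemeasurable).mp hXY).trans
      (by rw [hX, hY])
  rw [hpre, ← Measure.map_apply (hXm.prodMk hYm) hSm, hmap]
  haveI hFin : IsFiniteMeasure ((ENNReal.ofReal s)⁻¹ • volume.restrict (Icc (0:ℝ) s)) := by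
    constructor
    rw [Measure.smul_apply, Measure.restrict_apply_univ, smul_eq_mul, Real.volume_Icc]
    exact ENNReal.mul_lt_top (ENNReal.inv_lt_top.mpr (by simp [hs])) ENNReal.ofReal_lt_top
  rw [uniformOnIcc, smul_prod_smul_aux, Measure.prod_restrict, ← Measure.volume_eq_prod,
    Measure.smul_apply, Measure.restrict_apply hSm, smul_eq_mul]
  -- the triangles
  set T₁ : Set (ℝ × ℝ) :=
    {p | 0 ≤ p.2 ∧ p.2 < p.1 ∧ (1 - r₁) * p.1 + r₁ * p.2 ≤ d} with hT₁def
  set T₂ : Set (ℝ × ℝ) :=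
    {p | 0 ≤ p.1 ∧ p.1 ≤ p.2 ∧ r₂ * p.1 + (1 - r₂) * p.2 ≤ d} with hT₂def
  have hT₁m : MeasurableSet T₁ :=
    (measurableSet_le measurable_const measurable_snd).inter
      ((measurableSet_lt measurable_snd measurable_fst).inter
        (measurableSet_le ((measurable_fst.const_mul _).add (measurable_snd.const_mul _))
          measurable_const))
  have hT₂m : MeasurableSet T₂ :=
    (measurableSet_le measurable_const measurable_fst).inter
      ((measurableSet_le measurable_fst measurable_snd).inter
        (measurableSet_le ((measurable_fst.const_mul _).add (measurable_snd.const_mul _))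
          measurable_const))
  have hset : S ∩ (Icc (0:ℝ) s ×ˢ Icc (0:ℝ) s) = T₁ ∪ T₂ := by
    ext ⟨x, y⟩
    simp only [hSdef, hT₁def, hT₂def, mem_inter_iff, mem_setOf_eq, mem_prod, mem_Icc, mem_union]
    constructor
    · rintro ⟨⟨c1, c2⟩, ⟨hx0, hxs⟩, hy0, hys⟩
      rcases lt_or_ge y x with h | h
      · exact Or.inl ⟨hy0, h, c1⟩
      · exact Or.inr ⟨hx0, h, c2⟩
    · rintro (⟨hy0, hyx, c1⟩ | ⟨hx0, hxy, c2⟩)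
      · have hx0 : 0 ≤ x := le_of_lt (lt_of_le_of_lt hy0 hyx)
        have hxs : x ≤ s := by nlinarith [mul_nonneg hr₁0 hy0]
        have c2 : r₂ * x + (1 - r₂) * y ≤ d := by
          nlinarith [mul_nonneg (by linarith : (0:ℝ) ≤ 1 - r₁ - r₂) (by linarith : (0:ℝ) ≤ x - y)]
        exact ⟨⟨c1, c2⟩, ⟨hx0, hxs⟩, hy0, le_trans hyx.le hxs⟩
      · have hy0 : 0 ≤ y := le_trans hx0 hxy
        have hys : y ≤ s := by nlinarith [mul_nonneg hr₂0 hx0]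
        have c1 : (1 - r₁) * x + r₁ * y ≤ d := by
          nlinarith [mul_nonneg (by linarith : (0:ℝ) ≤ 1 - r₁ - r₂) (by linarith : (0:ℝ) ≤ y - x)]
        exact ⟨⟨c1, c2⟩, ⟨hx0, le_trans hxy hys⟩, hy0, hys⟩
  have hdisj : Disjoint T₁ T₂ := by
    rw [Set.disjoint_left]
    rintro ⟨x, y⟩ ⟨_, h₁, _⟩ ⟨_, h₂, _⟩
    exact absurd h₂ (not_le.mpr h₁)
  rw [hset, measure_union hdisj hT₂m]
  -- volume of T₁
  have hvol₁ : volume T₁ = ENNReal.ofReal (d^2/(2*(1 - r₁))) := by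
    rw [Measure.volume_eq_prod, Measure.prod_apply_symm hT₁m]
    have hsl : ∀ y : ℝ, volume ((fun x => (x, y)) ⁻¹' T₁)
        = (Icc 0 d).indicator (fun t => ENNReal.ofReal ((d - t)/(1 - r₁))) y := by
      intro y
      rcases le_or_gt 0 y with hy | hy
      · have hpre₁ : ((fun x => (x, y)) ⁻¹' T₁) = Ioc y ((d - r₁*y)/(1 - r₁)) := by
          ext x
          simp only [hT₁def, mem_preimage, mem_setOf_eq, mem_Ioc, hy, true_and]
          constructor
          · rintro ⟨h, h'⟩
            exact ⟨h, by rw [le_div_iff₀ e₁]; linarith⟩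
          · rintro ⟨h, h'⟩
            rw [le_div_iff₀ e₁] at h'
            exact ⟨h, by linarith⟩
        rw [hpre₁, Real.volume_Ioc]
        have hq : (d - r₁*y)/(1 - r₁) - y = (d - y)/(1 - r₁) := by
          field_simp
          ring
        rw [hq]
        by_cases hyd : y ≤ d
        · rw [indicator_of_mem (show y ∈ Icc (0:ℝ) d from ⟨hy, hyd⟩)]
        · rw [indicator_of_notMem (fun h => hyd h.2)]
          rw [ENNReal.ofReal_eq_zero]
          exact div_nonpos_of_nonpos_of_nonneg (by linarith) e₁.le
      · have hpre₁ : ((fun x => (x, y)) ⁻¹' T₁) = ∅ := by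
          ext x
          simp only [hT₁def, mem_preimage, mem_setOf_eq, mem_empty_iff_false, iff_false]
          rintro ⟨h, _⟩
          linarith
        rw [hpre₁, measure_empty, indicator_of_notMem (fun h => absurd h.1 (not_le.mpr hy))]
    simp_rw [hsl]
    rw [lintegral_indicator measurableSet_Icc]
    exact lint_tri_aux d (1 - r₁) hd.le e₁
  -- volume of T₂
  have hvol₂ : volume T₂ = ENNReal.ofReal (d^2/(2*(1 - r₂))) := by
    rw [Measure.volume_eq_prod, Measure.prod_apply hT₂m]
    have hsl : ∀ x : ℝ, volume (Prod.mk x ⁻¹' T₂)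
        = (Icc 0 d).indicator (fun t => ENNReal.ofReal ((d - t)/(1 - r₂))) x := by
      intro x
      rcases le_or_gt 0 x with hx | hx
      · have hpre₂ : (Prod.mk x ⁻¹' T₂) = Icc x ((d - r₂*x)/(1 - r₂)) := by
          ext y
          simp only [hT₂def, mem_preimage, mem_setOf_eq, mem_Icc, hx, true_and]
          constructor
          · rintro ⟨h, h'⟩
            exact ⟨h, by rw [le_div_iff₀ e₂]; linarith⟩
          · rintro ⟨h, h'⟩
            rw [le_div_iff₀ e₂] at h'
            exact ⟨h, by linarith⟩
        rw [hpre₂, Real.volume_Icc]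
        have hq : (d - r₂*x)/(1 - r₂) - x = (d - x)/(1 - r₂) := by
          field_simp
          ring
        rw [hq]
        by_cases hxd : x ≤ d
        · rw [indicator_of_mem (show x ∈ Icc (0:ℝ) d from ⟨hx, hxd⟩)]
        · rw [indicator_of_notMem (fun h => hxd h.2)]
          rw [ENNReal.ofReal_eq_zero]
          exact div_nonpos_of_nonpos_of_nonneg (by linarith) e₂.le
      · have hpre₂ : (Prod.mk x ⁻¹' T₂) = ∅ := by
          ext y
          simp only [hT₂def, mem_preimage, mem_setOf_eq, mem_empty_iff_false, iff_false]
          rintro ⟨h, _⟩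
          linarith
        rw [hpre₂, measure_empty, indicator_of_notMem (fun h => absurd h.1 (not_le.mpr hx))]
    simp_rw [hsl]
    rw [lintegral_indicator measurableSet_Icc]
    exact lint_tri_aux d (1 - r₂) hd.le e₂
  rw [hvol₁, hvol₂]
  rw [← ENNReal.ofReal_inv_of_pos hs,
    ← ENNReal.ofReal_add (by positivity) (by positivity),
    ← ENNReal.ofReal_mul (by positivity), ← ENNReal.ofReal_mul (by positivity)]
  congr 1
  field_simp
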